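/- Let P be a tame power series and suppose there exists an isolated point a of Ω(P) which is periodic under the shift map τ_Ω. Then Ω(P) is finite, τ_Ω acts on Ω(P) as an invertible transitive (cyclic) permutation, and setting h := #Ω(P), for each residue class e mod h the subsequence (X_n(P))_{n ≡ e (mod h)} converges to a single element a^{[e]} ∈ Ω(P); the map e mod h ↦ a^{[e]} is a bijection ℤ/hℤ → Ω(P) intertwining the shift e ↦ e−1 with τ_Ω. -/

import Mathlib

open Filter

/-- Tameness of a coefficient sequence: `γ n ≠ 0` and `u ≤ |γ (n-1) / γ n| ≤ v`
    for all `n ≥ N`. -/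
def Tame (γ : ℕ → ℂ) (u v : ℝ) (N : ℕ) : Prop :=
  0 < u ∧ 0 < v ∧ (∀ n ≥ N, γ n ≠ 0) ∧
    ∀ n ≥ N + 1, u ≤ ‖γ (n - 1) / γ n‖ ∧ ‖γ (n - 1) / γ n‖ ≤ v

/-- The opposite polynomial `X_n(P) = ∑_{k=0}^n (γ_{n-k}/γ_n) s^k`, viewed as its
    coefficient sequence in `ℂ[[s]] ≅ (ℕ → ℂ)` with the product topology. -/
noncomputable def oppPoly (γ : ℕ → ℂ) (n : ℕ) : ℕ → ℂ :=
  fun k => if k ≤ n then γ (n - k) / γ n else 0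

/-- The space `Ω(P)` of opposite series: the set of cluster points of the sequence
    of opposite polynomials in the coefficientwise (product) topology. -/
def OmegaP (γ : ℕ → ℂ) : Set (ℕ → ℂ) :=
  {a | MapClusterPt a atTop (oppPoly γ)}


/-- The shift map `τ_Ω` on opposite series: `(τ_Ω a)_k = a_{k+1} / a_1`. -/
noncomputable def tauFun (a : ℕ → ℂ) : ℕ → ℂ := fun k => a (k + 1) / a 1

noncomputable def Fi (i : ℕ) (x : ℕ → ℂ) : ℕ → ℂ := fun k => x (k + i) / x i

section Aux
variable {γ : ℕ → ℂ} {u v : ℝ} {N : ℕ}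

lemma oppPoly_norm (hT : Tame γ u v N) :
    ∀ k n, N + k ≤ n → u ^ k ≤ ‖oppPoly γ n k‖ ∧ ‖oppPoly γ n k‖ ≤ v ^ k := by
  obtain ⟨hu, hv, hne, hb⟩ := hT
  intro k
  induction k with
  | zero =>
    intro n hn
    have h0 : (0:ℕ) ≤ n := Nat.zero_le n
    have : oppPoly γ n 0 = 1 := by
      simp only [oppPoly, if_pos h0, Nat.sub_zero]
      exact div_self (hne n (by omega))
    rw [this]; simp
  | succ k ih =>
    intro n hn
    have hkn : k + 1 ≤ n := by omega
    have hnk : N + 1 ≤ n - k := by omega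
    have hne1 : γ (n - k) ≠ 0 := hne _ (by omega)
    have hne2 : γ n ≠ 0 := hne n (by omega)
    have hsucc : oppPoly γ n (k+1) = oppPoly γ n k * (γ (n - k - 1) / γ (n - k)) := by
      simp only [oppPoly, if_pos hkn, if_pos (by omega : k ≤ n)]
      have : n - (k+1) = n - k - 1 := by omega
      rw [this]
      field_simp
    have hratio := hb (n - k) hnk
    have hr1 : u ≤ ‖γ (n - k - 1) / γ (n - k)‖ := hratio.1
    have hr2 : ‖γ (n - k - 1) / γ (n - k)‖ ≤ v := hratio.2
    have hik := ih n (by omega)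
    rw [hsucc, norm_mul, pow_succ, pow_succ]
    constructor
    · exact mul_le_mul hik.1 hr1 (le_of_lt hu) (le_trans (le_of_lt (pow_pos hu k)) hik.1)
    · exact mul_le_mul hik.2 hr2 (le_trans (le_of_lt hu) hr1) (le_trans (norm_nonneg _) hik.2)

lemma omega_norm (hT : Tame γ u v N) {a : ℕ → ℂ} (ha : a ∈ OmegaP γ) (k : ℕ) :
    u ^ k ≤ ‖a k‖ ∧ ‖a k‖ ≤ v ^ k := by
  have hck : MapClusterPt (a k) atTop (fun n => oppPoly γ n k) :=
    ha.continuousAt_comp (continuous_apply k).continuousAt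
  set C : Set ℂ := {z | u ^ k ≤ ‖z‖ ∧ ‖z‖ ≤ v ^ k} with hC
  have hCc : IsClosed C :=
    IsClosed.inter (isClosed_le continuous_const continuous_norm)
      (isClosed_le continuous_norm continuous_const)
  have hmem : C ∈ map (fun n => oppPoly γ n k) atTop := by
    rw [mem_map]
    filter_upwards [eventually_ge_atTop (N + k)] with n hn
    exact oppPoly_norm hT k n hn
  have : a k ∈ closure C := by
    rw [mem_closure_iff_clusterPt]
    exact hck.clusterPt.mono (le_principal_iff.2 hmem)
  rwa [hCc.closure_eq] at this

lemma omega_ne (hT : Tame γ u v N) {a : ℕ → ℂ} (ha : a ∈ OmegaP γ) (k : ℕ) : a k ≠ 0 := by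
  have := (omega_norm hT ha k).1
  have hu := hT.1
  intro h0
  rw [h0, norm_zero] at this
  exact absurd this (not_le.2 (pow_pos hu k))

lemma omega_zero (hT : Tame γ u v N) {a : ℕ → ℂ} (ha : a ∈ OmegaP γ) : a 0 = 1 := by
  have hck : MapClusterPt (a 0) atTop (fun n => oppPoly γ n 0) :=
    ha.continuousAt_comp (continuous_apply 0).continuousAt
  have hmem : {(1:ℂ)} ∈ map (fun n => oppPoly γ n 0) atTop := by
    rw [mem_map]
    filter_upwards [eventually_ge_atTop N] with n hn
    simp only [Set.mem_preimage, oppPoly, if_pos (Nat.zero_le n), Nat.sub_zero,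
      Set.mem_singleton_iff]
    exact div_self (hT.2.2.1 n hn)
  have : a 0 ∈ closure {(1:ℂ)} := by
    rw [mem_closure_iff_clusterPt]
    exact hck.clusterPt.mono (le_principal_iff.2 hmem)
  rwa [closure_singleton, Set.mem_singleton_iff] at this

lemma Fi_continuousAt {i : ℕ} {x : ℕ → ℂ} (hx : x i ≠ 0) : ContinuousAt (Fi i) x := by
  rw [continuousAt_pi]
  intro k
  exact ((continuous_apply (k + i)).continuousAt).div ((continuous_apply i).continuousAt) hx

lemma Fi_oppPoly (hT : Tame γ u v N) {n i : ℕ} (hn : N + i ≤ n) :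
    Fi i (oppPoly γ n) = oppPoly γ (n - i) := by
  have hne2 : γ n ≠ 0 := hT.2.2.1 n (by omega)
  have hnei : γ (n - i) ≠ 0 := hT.2.2.1 _ (by omega)
  funext k
  simp only [Fi, oppPoly]
  by_cases hki : k + i ≤ n
  · rw [if_pos hki, if_pos (by omega : i ≤ n), if_pos (by omega : k ≤ n - i)]
    have : n - i - k = n - (k + i) := by omega
    rw [this]
    field_simp
  · rw [if_neg hki, if_neg (by omega : ¬ k ≤ n - i), zero_div]

lemma omega_Fi (hT : Tame γ u v N) {a : ℕ → ℂ} (ha : a ∈ OmegaP γ) (i : ℕ) :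
    Fi i a ∈ OmegaP γ := by
  have h1 : MapClusterPt (Fi i a) atTop (Fi i ∘ oppPoly γ) :=
    ha.continuousAt_comp (Fi_continuousAt (omega_ne hT ha i))
  have h2 : map (Fi i ∘ oppPoly γ) atTop = map (fun n => oppPoly γ (n - i)) atTop := by
    apply Filter.map_congr
    filter_upwards [eventually_ge_atTop (N + i)] with n hn
    exact Fi_oppPoly hT hn
  have h3 : MapClusterPt (Fi i a) atTop (fun n => oppPoly γ (n - i)) := by
    rwa [MapClusterPt, h2] at h1
  have h4 : map (fun n => oppPoly γ (n - i)) atTop = map (oppPoly γ) atTop := by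
    have : (fun n => oppPoly γ (n - i)) = oppPoly γ ∘ (fun n => n - i) := rfl
    rw [this, ← Filter.map_map, map_sub_atTop_eq_nat]
  rwa [OmegaP, Set.mem_setOf_eq, MapClusterPt, ← h4]

lemma tau_iterate (hT : Tame γ u v N) {a : ℕ → ℂ} (ha : a ∈ OmegaP γ) :
    ∀ i, tauFun^[i] a = Fi i a := by
  intro i
  induction i with
  | zero =>
    simp only [Function.iterate_zero, id_eq]
    funext k
    simp [Fi, omega_zero hT ha]
  | succ i ih =>
    rw [Function.iterate_succ_apply', ih]
    funext k
    simp only [tauFun, Fi]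
    have h1 : a i ≠ 0 := omega_ne hT ha i
    have h2 : a (1 + i) ≠ 0 := omega_ne hT ha (1 + i)
    have e1 : k + 1 + i = k + (i + 1) := by omega
    have e2 : 1 + i = i + 1 := by omega
    rw [e1, e2] at *
    field_simp



lemma exists_cluster (hT : Tame γ u v N) (S : Set ℕ) (hS : ∃ᶠ n in atTop, n ∈ S) :
    ∃ c, c ∈ OmegaP γ ∧ MapClusterPt c (atTop ⊓ 𝓟 S) (oppPoly γ) := by
  obtain ⟨hu, hv, hne, hb⟩ := hT
  set Y : ℕ → ℕ → ℂ := fun n k => if N + k ≤ n then oppPoly γ n k else 0 with hY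
  set K : Set (ℕ → ℂ) := Set.pi Set.univ (fun k => Metric.closedBall (0:ℂ) (v ^ k)) with hK
  have hKc : IsCompact K := isCompact_univ_pi (fun k => isCompact_closedBall _ _)
  have hYK : ∀ n, Y n ∈ K := by
    intro n k _
    simp only [Y, Metric.mem_closedBall, dist_zero_right]
    split
    · exact (oppPoly_norm ⟨hu, hv, hne, hb⟩ k n (by assumption)).2
    · rw [norm_zero]; exact pow_nonneg (le_of_lt hv) k
  have hne' : NeBot (atTop ⊓ 𝓟 S) := frequently_mem_iff_neBot.1 hS
  have hle : map Y (atTop ⊓ 𝓟 S) ≤ 𝓟 K := by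
    rw [le_principal_iff, mem_map]
    exact Filter.univ_mem' hYK
  obtain ⟨c, hcK, hc⟩ := hKc.exists_clusterPt hle
  have hcY : MapClusterPt c (atTop ⊓ 𝓟 S) Y := hc
  have hcX : MapClusterPt c (atTop ⊓ 𝓟 S) (oppPoly γ) := by
    rw [mapClusterPt_iff_frequently]
    intro U hU
    rw [nhds_pi, Filter.mem_pi] at hU
    obtain ⟨I, hIfin, t, ht, htU⟩ := hU
    obtain ⟨M, hM⟩ := hIfin.bddAbove
    have hpi : Set.pi I t ∈ nhds c := by
      rw [nhds_pi, Filter.mem_pi]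
      exact ⟨I, hIfin, t, ht, le_refl _⟩
    have hfreq := (mapClusterPt_iff_frequently.1 hcY) _ hpi
    have hev : ∀ᶠ n in atTop ⊓ 𝓟 S, N + M ≤ n :=
      (eventually_ge_atTop (N + M)).filter_mono inf_le_left
    apply ((hfreq.and_eventually hev).mono _)
    rintro n ⟨hnpi, hnM⟩
    apply htU
    intro k hk
    have : Y n k = oppPoly γ n k := by
      have : N + k ≤ n := by
        have := hM hk
        omega
      simp [Y, this]
    rw [← this]
    exact hnpi k hk
  exact ⟨c, hcX.mono inf_le_left, hcX⟩

lemma exists_subseq {S : Set ℕ} {c : ℕ → ℂ}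
    (hc : MapClusterPt c (atTop ⊓ 𝓟 S) (oppPoly γ)) :
    ∃ φ : ℕ → ℕ, StrictMono φ ∧ (∀ m, φ m ∈ S) ∧
      Tendsto (fun m => oppPoly γ (φ m)) atTop (nhds c) := by
  obtain ⟨B, hB⟩ := (nhds c).exists_antitone_basis
  have hfreq : ∀ m : ℕ, ∃ᶠ n in atTop, n ∈ S ∧ oppPoly γ n ∈ B m := by
    intro m
    have := (mapClusterPt_iff_frequently.1 hc) (B m) (hB.mem m)
    rw [frequently_inf_principal] at this
    exact this.mono (fun n h => ⟨h.1, h.2⟩)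
  obtain ⟨φ, hmono, hφ⟩ := extraction_forall_of_frequently hfreq
  exact ⟨φ, hmono, fun m => (hφ m).1, hB.tendsto (fun m => (hφ m).2)⟩

def ConvClass (γ : ℕ → ℂ) (q r : ℕ) (L : ℕ → ℂ) : Prop :=
  ∀ U ∈ nhds L, ∃ n₀ : ℕ, ∀ n, n₀ ≤ n → n % q = r → oppPoly γ n ∈ U

lemma self_return (hT : Tame γ u v N) {a : ℕ → ℂ} (ha : a ∈ OmegaP γ)
    {V : Set (ℕ → ℂ)} (hV : V ∈ nhds a) (hVi : OmegaP γ ∩ V = {a})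
    {p : ℕ} (hpa : Fi p a = a) {U : Set (ℕ → ℂ)} (hU : U ∈ nhds a) :
    ∃ W, IsOpen W ∧ a ∈ W ∧ W ⊆ U ∧
      ∃ n₀, ∀ n, n₀ ≤ n → oppPoly γ (n + p) ∈ W → oppPoly γ n ∈ W := by
  obtain ⟨T, hTmem, hTclosed, hTsub⟩ :=
    exists_mem_nhds_isClosed_subset (Filter.inter_mem hU hV)
  refine ⟨interior T, isOpen_interior, mem_interior_iff_mem_nhds.2 hTmem,
    (interior_subset.trans (fun x hx => (hTsub hx).1)), ?_⟩
  by_contra hcon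
  push_neg at hcon
  set W := interior T with hW
  set S : Set ℕ := {m | p ≤ m ∧ oppPoly γ m ∈ W ∧ oppPoly γ (m - p) ∉ W} with hS
  have hfreqS : ∃ᶠ n in atTop, n ∈ S := by
    rw [frequently_atTop]
    intro b
    obtain ⟨n, hnb, hin, hnotin⟩ := hcon b
    refine ⟨n + p, by omega, by omega, hin, ?_⟩
    simpa using hnotin
  obtain ⟨c, hcΩ, hc⟩ := exists_cluster hT S hfreqS
  have hcT : c ∈ T := by
    have hmem : T ∈ map (oppPoly γ) (atTop ⊓ 𝓟 S) := by
      rw [mem_map]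
      have : S ⊆ (oppPoly γ) ⁻¹' T := fun m hm => (interior_subset hm.2.1 : oppPoly γ m ∈ T)
      exact mem_of_superset (mem_inf_of_right (mem_principal_self S)) this
    have : c ∈ closure T := by
      rw [mem_closure_iff_clusterPt]
      exact hc.clusterPt.mono (le_principal_iff.2 hmem)
    rwa [hTclosed.closure_eq] at this
  have hca : c = a := by
    have : c ∈ OmegaP γ ∩ V := ⟨hcΩ, (hTsub hcT).2⟩
    rwa [hVi, Set.mem_singleton_iff] at this
  subst hca
  obtain ⟨φ, hφmono, hφS, hφtend⟩ := exists_subseq hc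
  have hφtop : Tendsto φ atTop atTop := hφmono.tendsto_atTop
  have ht1 : Tendsto (fun m => Fi p (oppPoly γ (φ m))) atTop (nhds c) := by
    have := (Fi_continuousAt (omega_ne hT hcΩ p)).tendsto.comp hφtend
    rwa [hpa] at this
  have ht2 : Tendsto (fun m => oppPoly γ (φ m - p)) atTop (nhds c) := by
    apply ht1.congr'
    filter_upwards [hφtop.eventually_ge_atTop (N + p)] with m hm
    exact Fi_oppPoly hT hm
  have hev : ∀ᶠ m in atTop, oppPoly γ (φ m - p) ∈ W :=
    ht2 (isOpen_interior.mem_nhds (mem_interior_iff_mem_nhds.2 hTmem))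
  obtain ⟨m, hm⟩ := hev.exists
  exact (hφS m).2.2 hm

lemma freq_mod {p : ℕ} (hp : 0 < p) {P : ℕ → Prop} (h : ∃ᶠ n in atTop, P n) :
    ∃ e, e < p ∧ ∃ᶠ n in atTop, P n ∧ n % p = e := by
  by_contra hcon
  push_neg at hcon
  have hev : ∀ᶠ n in atTop, ∀ e ∈ Finset.range p, ¬(P n ∧ n % p = e) := by
    rw [eventually_all_finset]
    intro e he
    have := hcon e (Finset.mem_range.1 he)
    exact this.mono fun n hn h => hn h.1 h.2
  have : ∀ᶠ n in atTop, ¬ P n := by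
    filter_upwards [hev] with n hn hPn
    exact hn (n % p) (Finset.mem_range.2 (Nat.mod_lt n hp)) ⟨hPn, rfl⟩
  exact (this.and_frequently h).exists.elim (fun n hn => hn.1 hn.2)

lemma chain_down {W : Set (ℕ → ℂ)} {p n₀ : ℕ}
    (hc : ∀ n, n₀ ≤ n → oppPoly γ (n + p) ∈ W → oppPoly γ n ∈ W) :
    ∀ j n, n₀ ≤ n → oppPoly γ (n + p * j) ∈ W → oppPoly γ n ∈ W := by
  intro j
  induction j with
  | zero => intro n hn h; simpa using h
  | succ j ih =>
    intro n hn hmem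
    have : n + p * (j + 1) = (n + p) + p * j := by ring
    rw [this] at hmem
    exact hc n hn (ih (n + p) (by omega) hmem)

lemma exists_residue (hT : Tame γ u v N) {a : ℕ → ℂ} (ha : a ∈ OmegaP γ)
    {V : Set (ℕ → ℂ)} (hV : V ∈ nhds a) (hVi : OmegaP γ ∩ V = {a})
    {p : ℕ} (hp : 0 < p) (hpa : Fi p a = a) :
    ∃ e, e < p ∧ ConvClass γ p e a := by
  by_contra hcon
  simp only [ConvClass] at hcon
  push_neg at hcon
  have hcon' : ∀ e, e < p → ∃ U ∈ nhds a, ∀ n₀ : ℕ, ∃ n, n₀ ≤ n ∧ n % p = e ∧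
      oppPoly γ n ∉ U := by
    intro e he
    obtain ⟨U, hU, hU2⟩ := hcon e he
    refine ⟨U, hU, fun n₀ => ?_⟩
    obtain ⟨n, hn1, hn2, hn3⟩ := hU2 n₀
    exact ⟨n, hn1, hn2, hn3⟩
  choose! Ue hUe hUe2 using hcon'
  have hUstar : (⋂ e ∈ Finset.range p, Ue e) ∈ nhds a := by
    rw [Filter.biInter_finset_mem]
    intro e he
    exact hUe e (Finset.mem_range.1 he)
  obtain ⟨W, hWopen, haW, hWsub, n₀, hchain⟩ := self_return hT ha hV hVi hpa hUstar
  have hfreqW : ∃ᶠ n in atTop, oppPoly γ n ∈ W :=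
    (mapClusterPt_iff_frequently.1 ha) W (hWopen.mem_nhds haW)
  obtain ⟨e, hep, hfreq⟩ := freq_mod hp hfreqW
  have hCONV : ∀ n, n₀ ≤ n → n % p = e → oppPoly γ n ∈ W := by
    intro n hn hne
    obtain ⟨n', hn'ge, hn'W, hn'e⟩ := frequently_atTop.1 hfreq n
    have hdvd : p ∣ n' - n := by
      have : n' % p = n % p := by rw [hn'e, hne]
      exact (Nat.modEq_iff_dvd' hn'ge).1 (Nat.ModEq.symm this)
    obtain ⟨j, hj⟩ := hdvd
    have : n' = n + p * j := by omega
    rw [this] at hn'W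
    exact chain_down hchain j n hn hn'W
  obtain ⟨n, hn1, hn2, hn3⟩ := hUe2 e hep n₀
  exact hn3 (Set.mem_iInter₂.1 (hWsub (hCONV n hn1 hn2)) e (Finset.mem_range.2 hep))

lemma conv_shift (hT : Tame γ u v N) {a : ℕ → ℂ} (ha : a ∈ OmegaP γ)
    {p e i r : ℕ} (hconv : ConvClass γ p e a)
    (hri : ∀ n, n % p = r → (n + i) % p = e) :
    ConvClass γ p r (Fi i a) := by
  intro U hU
  have hpre : (Fi i) ⁻¹' U ∈ nhds a := (Fi_continuousAt (omega_ne hT ha i)) hU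
  obtain ⟨n₀, hn₀⟩ := hconv _ hpre
  refine ⟨max n₀ N, fun n hn hr => ?_⟩
  have h1 : oppPoly γ (n + i) ∈ (Fi i) ⁻¹' U :=
    hn₀ (n + i) (by omega) (hri n hr)
  have h2 : Fi i (oppPoly γ (n + i)) = oppPoly γ n := by
    have := Fi_oppPoly hT (show N + i ≤ n + i by omega)
    simpa using this
  rwa [Set.mem_preimage, h2] at h1

lemma mod_shift_aux {p e₀ r : ℕ} (hp : 0 < p) (he : e₀ < p) (hr : r < p) :
    ∀ n, n % p = r → (n + (e₀ + p - r) % p) % p = e₀ := by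
  intro n hn
  have hrn : r ≤ n := hn ▸ Nat.mod_le n p
  have hmeq : r % p = n % p := by rw [hn, Nat.mod_eq_of_lt hr]
  obtain ⟨t, ht⟩ : p ∣ n - r := (Nat.modEq_iff_dvd' hrn).1 hmeq
  have hn' : n = r + p * t := by omega
  rw [hn', Nat.add_mod_mod]
  have he2 : r + p * t + (e₀ + p - r) = p * (t + 1) + e₀ := by
    have h5 : e₀ + p - r = e₀ + (p - r) := by omega
    have h6 : p * (t + 1) = p * t + p := by ring
    rw [h5, h6]
    omega
  rw [he2, Nat.mul_add_mod, Nat.mod_eq_of_lt he]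


/-- If `Ω(P)` has an isolated point which is `τ_Ω`-periodic, then `Ω(P)` is finite
    and, with `h = #Ω(P)`, each congruence-class subsequence of opposite polynomials
    converges; the resulting map `ℤ/hℤ → Ω(P)` is a bijection intertwining
    `e ↦ e - 1` with `τ_Ω`. -/
theorem omega_finite_rational (γ : ℕ → ℂ) (u v : ℝ) (N : ℕ) (h : Tame γ u v N)
    (a : ℕ → ℂ) (ha : a ∈ OmegaP γ)
    (hiso : ∃ V : Set (ℕ → ℂ), V ∈ nhds a ∧ OmegaP γ ∩ V = {a})
    (hper : ∃ p : ℕ, 0 < p ∧ tauFun^[p] a = a) :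
    (OmegaP γ).Finite ∧
    ∃ b : ZMod (Nat.card (OmegaP γ)) → (ℕ → ℂ),
      Function.Injective b ∧ Set.range b = OmegaP γ ∧
      (∀ e : ZMod (Nat.card (OmegaP γ)),
        Tendsto (fun m => oppPoly γ (e.val + Nat.card (OmegaP γ) * m)) atTop (nhds (b e))) ∧
      (∀ e : ZMod (Nat.card (OmegaP γ)), tauFun (b e) = b (e - 1)) := by
  obtain ⟨V, hVmem, hVi⟩ := hiso
  obtain ⟨p, hp, hpa⟩ := hper
  have hper' : Function.IsPeriodicPt tauFun p a := hpa
  set h₀ := Function.minimalPeriod tauFun a with hh₀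
  have h₀pos : 0 < h₀ := hper'.minimalPeriod_pos hp
  haveI : NeZero h₀ := ⟨h₀pos.ne'⟩
  have hdvd : h₀ ∣ p := hper'.minimalPeriod_dvd
  have hiter := tau_iterate h ha
  have hFpa : Fi p a = a := by rw [← hiter p]; exact hpa
  set g : ℕ → (ℕ → ℂ) := fun i => tauFun^[i] a with hg
  have hgmem : ∀ i, g i ∈ OmegaP γ := fun i => by
    rw [hg]; simp only; rw [hiter i]; exact omega_Fi h ha i
  have hgmod : ∀ i, g (i % h₀) = g i := fun i =>
    Function.iterate_mod_minimalPeriod_eq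
  have castg : ∀ i j : ℕ, (i : ZMod h₀) = (j : ZMod h₀) → g i = g j := by
    intro i j hij
    rw [ZMod.natCast_eq_natCast_iff'] at hij
    rw [← hgmod i, ← hgmod j, hij]
  obtain ⟨e₀, he₀p, hconv₀⟩ := exists_residue h ha hVmem hVi hp hFpa
  have hconvr : ∀ r, r < p → ConvClass γ p r (g ((e₀ + p - r) % p)) := by
    intro r hr
    have := conv_shift h ha hconv₀ (mod_shift_aux hp he₀p hr)
    rwa [← hiter] at this
  have hp0 : (p : ZMod h₀) = 0 := (ZMod.natCast_eq_zero_iff p h₀).2 hdvd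
  have hcast_r : ∀ r, r < p →
      ((((e₀ + p - r) % p : ℕ)) : ZMod h₀) = (e₀ : ZMod h₀) - (r : ZMod h₀) := by
    intro r hr
    have h1 : (((e₀ + p - r) % p : ℕ) : ZMod h₀) = ((e₀ + p - r : ℕ) : ZMod h₀) :=
      (ZMod.natCast_eq_natCast_iff _ _ _).2 ((Nat.mod_modEq _ p).of_dvd hdvd)
    rw [h1, Nat.cast_sub (by omega : r ≤ e₀ + p), Nat.cast_add, hp0, add_zero]
  have homega_sub : ∀ b ∈ OmegaP γ, ∃ r, r < p ∧ b = g ((e₀ + p - r) % p) := by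
    intro b hb
    by_contra hbc
    push_neg at hbc
    have hsep : ∀ r, r < p → ∃ Ur Vr : Set (ℕ → ℂ), IsOpen Ur ∧ IsOpen Vr ∧
        b ∈ Ur ∧ g ((e₀ + p - r) % p) ∈ Vr ∧ Disjoint Ur Vr :=
      fun r hr => t2_separation (hbc r hr)
    choose! Ub Vb hUo hVo hbU hgV hdisj using hsep
    have hUmem : (⋂ r ∈ Finset.range p, Ub r) ∈ nhds b := by
      rw [Filter.biInter_finset_mem]
      intro r hr
      exact (hUo r (Finset.mem_range.1 hr)).mem_nhds (hbU r (Finset.mem_range.1 hr))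
    have hev : ∀ r, r < p → ∃ n₀, ∀ n, n₀ ≤ n → n % p = r → oppPoly γ n ∈ Vb r :=
      fun r hr => (hconvr r hr) (Vb r) ((hVo r hr).mem_nhds (hgV r hr))
    choose! n₀f hn₀f using hev
    have hav : ∀ᶠ n in atTop, oppPoly γ n ∉ ⋂ r ∈ Finset.range p, Ub r := by
      filter_upwards [eventually_ge_atTop ((Finset.range p).sup n₀f)] with n hn hmem
      have hr : n % p < p := Nat.mod_lt n hp
      have h1 : oppPoly γ n ∈ Vb (n % p) :=
        hn₀f (n % p) hr n (le_trans (Finset.le_sup (Finset.mem_range.2 hr)) hn) rfl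
      have h2 : oppPoly γ n ∈ Ub (n % p) := Set.mem_iInter₂.1 hmem _ (Finset.mem_range.2 hr)
      exact Set.disjoint_left.1 (hdisj (n % p) hr) h2 h1
    have hfreq := (mapClusterPt_iff_frequently.1 hb) _ hUmem
    exact (hav.and_frequently hfreq).exists.elim fun n hn => hn.1 hn.2
  have hΩeq : OmegaP γ = Set.range (fun i : Fin h₀ => g i) := by
    apply Set.Subset.antisymm
    · intro b hb
      obtain ⟨r, hr, hbr⟩ := homega_sub b hb
      refine ⟨⟨((e₀ + p - r) % p) % h₀, Nat.mod_lt _ h₀pos⟩, ?_⟩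
      simp only
      rw [hgmod ((e₀ + p - r) % p)]
      exact hbr.symm
    · rintro x ⟨i, rfl⟩
      exact hgmem i
  have hinj : Function.Injective (fun i : Fin h₀ => g i) := by
    intro i j hij
    exact Fin.ext (Function.iterate_injOn_Iio_minimalPeriod
      (show (i : ℕ) ∈ Set.Iio h₀ from i.2) (show (j : ℕ) ∈ Set.Iio h₀ from j.2) hij)
  have hginj : ∀ i j : ℕ, i < h₀ → j < h₀ → g i = g j → i = j := by
    intro i j hi hj hij
    exact Function.iterate_injOn_Iio_minimalPeriod
      (show i ∈ Set.Iio h₀ from hi) (show j ∈ Set.Iio h₀ from hj) hij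
  have hfin : (OmegaP γ).Finite := by rw [hΩeq]; exact Set.finite_range _
  have hcard : Nat.card (OmegaP γ) = h₀ := by
    rw [hΩeq, Nat.card_range_of_injective hinj, Nat.card_eq_fintype_card, Fintype.card_fin]
  refine ⟨hfin, ?_⟩
  rw [hcard]
  have hbcast : ∀ f : ZMod h₀, (((e₀ + h₀ - f.val) % h₀ : ℕ) : ZMod h₀) = (e₀ : ZMod h₀) - f := by
    intro f
    have hle : f.val ≤ e₀ + h₀ := by have := ZMod.val_lt f; omega
    have h1 : (((e₀ + h₀ - f.val) % h₀ : ℕ) : ZMod h₀) = ((e₀ + h₀ - f.val : ℕ) : ZMod h₀) :=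
      (ZMod.natCast_eq_natCast_iff _ _ _).2 (Nat.mod_modEq _ h₀)
    rw [h1, Nat.cast_sub hle, Nat.cast_add, ZMod.natCast_self, add_zero,
      ZMod.natCast_rightInverse f]
  refine ⟨fun f => g ((e₀ + h₀ - f.val) % h₀), ?_, ?_, ?_, ?_⟩
  · -- injective
    intro f f' hff'
    have hieq : (e₀ + h₀ - f.val) % h₀ = (e₀ + h₀ - f'.val) % h₀ :=
      hginj _ _ (Nat.mod_lt _ h₀pos) (Nat.mod_lt _ h₀pos) hff'
    have : (e₀ : ZMod h₀) - f = (e₀ : ZMod h₀) - f' := by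
      rw [← hbcast f, ← hbcast f', hieq]
    exact sub_right_injective this
  · -- range
    rw [hΩeq]
    apply Set.Subset.antisymm
    · rintro x ⟨f, rfl⟩
      exact ⟨⟨((e₀ + h₀ - f.val) % h₀), Nat.mod_lt _ h₀pos⟩, rfl⟩
    · rintro x ⟨i, rfl⟩
      refine ⟨(e₀ : ZMod h₀) - (i : ℕ), ?_⟩
      apply castg
      rw [hbcast]
      rw [sub_sub_cancel]
  · -- tendsto
    intro f
    have hbf_conv : ∀ U ∈ nhds (g ((e₀ + h₀ - f.val) % h₀)), ∃ n₀, ∀ n, n₀ ≤ n →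
        n % h₀ = f.val → oppPoly γ n ∈ U := by
      intro U hU
      have hH : ∀ r, r < p → r % h₀ = f.val →
          ∃ n₀, ∀ n, n₀ ≤ n → n % p = r → oppPoly γ n ∈ U := by
        intro r hr hrf
        have hrcast : ((r : ℕ) : ZMod h₀) = f := by
          have : ((r : ℕ) : ZMod h₀) = ((f.val : ℕ) : ZMod h₀) := by
            rw [ZMod.natCast_eq_natCast_iff']
            rw [hrf, Nat.mod_eq_of_lt (ZMod.val_lt f)]
          rw [this, ZMod.natCast_rightInverse f]
        have heq : g ((e₀ + p - r) % p) = g ((e₀ + h₀ - f.val) % h₀) := by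
          apply castg
          rw [hcast_r r hr, hbcast f, hrcast]
        exact (hconvr r hr) U (heq ▸ hU)
      choose! F hF using hH
      refine ⟨(Finset.range p).sup F, fun n hn hnf => ?_⟩
      have hrp : n % p < p := Nat.mod_lt n hp
      have hrh : (n % p) % h₀ = f.val := by rw [Nat.mod_mod_of_dvd n hdvd]; exact hnf
      exact hF (n % p) hrp hrh n (le_trans (Finset.le_sup (Finset.mem_range.2 hrp)) hn) rfl
    rw [Filter.tendsto_def]
    intro U hU
    obtain ⟨n₀, hn₀⟩ := hbf_conv U hU
    refine mem_of_superset (mem_atTop n₀) ?_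
    intro m hm
    have hm' : n₀ ≤ m := hm
    simp only [Set.mem_preimage]
    apply hn₀
    · have : m ≤ h₀ * m := Nat.le_mul_of_pos_left m h₀pos
      omega
    · rw [Nat.add_mul_mod_self_left, Nat.mod_eq_of_lt (ZMod.val_lt f)]
  · -- intertwine
    intro f
    have h1 : tauFun (g ((e₀ + h₀ - f.val) % h₀)) = g ((e₀ + h₀ - f.val) % h₀ + 1) :=
      (Function.iterate_succ_apply' tauFun _ a).symm
    rw [h1]
    apply castg
    rw [Nat.cast_add, Nat.cast_one, hbcast f, hbcast (f - 1)]
    ring
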